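/- Let Z ∈ ℂ^{m×m} be block diagonal with Jordan blocks J_j of sizes (k_j+1) for distinct eigenvalues z_j, and let w be the vector whose block-j component is β_j · e_{k_j+1} (last standard basis vector of the block). Then for any polynomials p, q, the Euclidean inner product of p(Z)w and q(Z)w equals ∑_j |β_j|² ∑_{r=0}^{k_j} |∏_{i=1}^r α_i^{(j)} / r!|² · conj(q^{(r)}(z_j)) · p^{(r)}(z_j). -/

import Mathlib

open Polynomial Matrix

/-- The Jordan block of size `(k+1)×(k+1)` with diagonal entries `z` and superdiagonal
entries `α_k, …, α_1` from top to bottom, i.e. `J_{i,i+1} = α_{k-i}` (0-based `i`). -/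
def jordanBlock (k : ℕ) (z : ℂ) (α : ℕ → ℂ) : Matrix (Fin (k + 1)) (Fin (k + 1)) ℂ :=
  fun i j =>
    if (i : ℕ) = (j : ℕ) then z
    else if (j : ℕ) = (i : ℕ) + 1 then α (k - (i : ℕ)) else 0

namespace StmtAux

noncomputable def cVec (k : ℕ) (z : ℂ) (α : ℕ → ℂ) (p : ℂ[X]) : Fin (k+1) → ℂ :=
  fun i => (∏ s ∈ Finset.Icc 1 (k - (i:ℕ)), α s) / ((k - (i:ℕ)).factorial : ℂ)
    * (derivative^[k - (i:ℕ)] p).eval z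

def eLast (k : ℕ) : Fin (k+1) → ℂ := fun i => if (i:ℕ) = k then 1 else 0

lemma iter_deriv_X_mul (r : ℕ) (p : ℂ[X]) :
    derivative^[r] (X * p) = X * derivative^[r] p + (r : ℂ[X]) * derivative^[r-1] p := by
  induction r generalizing p with
  | zero => simp
  | succ r ih =>
    rw [Function.iterate_succ_apply', ih, Function.iterate_succ_apply']
    cases r with
    | zero => simp [derivative_mul]; ring
    | succ r =>
      rw [show r + 1 - 1 = r from rfl, show r + 1 + 1 - 1 = r + 1 from rfl]
      simp only [Function.iterate_succ_apply']
      simp [derivative_mul]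
      push_cast
      ring

lemma jordan_step (k : ℕ) (z : ℂ) (α : ℕ → ℂ) (p : ℂ[X]) :
    jordanBlock k z α *ᵥ cVec k z α p = cVec k z α (X * p) := by
  funext i
  have hsum : (jordanBlock k z α *ᵥ cVec k z α p) i
      = z * cVec k z α p i
        + (if h : (i : ℕ) < k then α (k - (i:ℕ)) * cVec k z α p ⟨(i:ℕ)+1, by omega⟩ else 0) := by
    rw [mulVec, dotProduct]
    by_cases h : (i : ℕ) < k
    · rw [dif_pos h]
      rw [Finset.sum_eq_add_of_mem i ⟨(i:ℕ)+1, by omega⟩ (Finset.mem_univ _) (Finset.mem_univ _)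
        (by simp [Fin.ext_iff]) ?_]
      · simp [jordanBlock]
      · intro j _ hj
        obtain ⟨h1, h2⟩ := not_or.mp (by simpa using hj)
        have h1' : (i : ℕ) ≠ (j : ℕ) := fun hh => h1 (Fin.ext hh.symm)
        have h2' : (j : ℕ) ≠ (i : ℕ) + 1 := fun hh => h2 (Fin.ext hh)
        simp [jordanBlock, h1', h2']
    · rw [dif_neg h]
      have hik : (i : ℕ) = k := by omega
      rw [Finset.sum_eq_single i ?_ (by simp)]
      · have : (i : ℕ) = (i : ℕ) := rfl
        simp [jordanBlock]
      · intro j _ hj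
        have h1' : (i : ℕ) ≠ (j : ℕ) := fun hh => hj (Fin.ext hh.symm)
        have h2' : (j : ℕ) ≠ (i : ℕ) + 1 := by have := j.isLt; omega
        simp [jordanBlock, h1', h2', add_comm]
  rw [hsum]
  unfold cVec
  rw [iter_deriv_X_mul]
  by_cases h : (i : ℕ) < k
  · rw [dif_pos h]
    set r := k - (i : ℕ) with hr
    have hr1 : 1 ≤ r := by omega
    have : k - ((i:ℕ)+1) = r - 1 := by omega
    simp only [this]
    have hprod : ∏ s ∈ Finset.Icc 1 r, α s = (∏ s ∈ Finset.Icc 1 (r-1), α s) * α r := by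
      rw [show r = (r-1)+1 by omega, Finset.prod_Icc_succ_top (by omega)]
      congr 1 <;> omega
    have hfac : (r.factorial : ℂ) = r * (r-1).factorial := by
      rw [show r = (r-1)+1 by omega, Nat.factorial_succ]
      push_cast
      congr 2 <;> omega
    have hfac0 : ((r-1).factorial : ℂ) ≠ 0 := Nat.cast_ne_zero.mpr (Nat.factorial_ne_zero _)
    have hr0 : (r : ℂ) ≠ 0 := Nat.cast_ne_zero.mpr (by omega)
    simp only [eval_add, eval_mul, eval_X, eval_natCast]
    rw [hprod, hfac]
    field_simp
  · rw [dif_neg h]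
    have hik : k - (i : ℕ) = 0 := by omega
    simp [hik]

lemma aeval_jordan (k : ℕ) (z : ℂ) (α : ℕ → ℂ) (p : ℂ[X]) :
    (aeval (jordanBlock k z α) p) *ᵥ eLast k = cVec k z α p := by
  induction p using Polynomial.induction_on with
  | C a =>
    rw [aeval_C, Algebra.algebraMap_eq_smul_one, smul_mulVec, one_mulVec]
    funext i
    by_cases h : (i : ℕ) = k
    · have : k - (i : ℕ) = 0 := by omega
      simp [cVec, eLast, h, this]
    · have h0 : 0 < k - (i : ℕ) := by have := i.isLt; omega
      simp [cVec, eLast, h, iterate_derivative_C h0]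
  | add p q hp hq =>
    rw [map_add, add_mulVec, hp, hq]
    funext i
    simp [cVec]
    ring
  | monomial nn a ih =>
    have hrw : (C a * X ^ (nn + 1) : ℂ[X]) = X * (C a * X ^ nn) := by ring
    rw [hrw, _root_.map_mul, aeval_X, ← mulVec_mulVec, ih, jordan_step]


noncomputable def bdAlgHom {ι : Type*} [Fintype ι] [DecidableEq ι] (m' : ι → Type*)
    [∀ i, Fintype (m' i)] [∀ i, DecidableEq (m' i)] :
    (∀ i, Matrix (m' i) (m' i) ℂ) →ₐ[ℂ] Matrix ((i : ι) × m' i) ((i : ι) × m' i) ℂ :=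
  { Matrix.blockDiagonal'RingHom m' ℂ with
    commutes' := fun c => by
      simp only [Matrix.blockDiagonal'RingHom, RingHom.coe_mk, MonoidHom.coe_mk, OneHom.coe_mk]
      have : (algebraMap ℂ (∀ i, Matrix (m' i) (m' i) ℂ)) c = fun i => c • 1 := by
        funext i
        simp [Algebra.algebraMap_eq_smul_one]
      rw [this, show (fun i : ι => c • (1 : Matrix (m' i) (m' i) ℂ)) = c • 1 from rfl,
        Matrix.blockDiagonal'_smul, Matrix.blockDiagonal'_one,
        Algebra.algebraMap_eq_smul_one] }

lemma bd_mulVec {ι : Type*} [Fintype ι] [DecidableEq ι] {m' : ι → Type*}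
    [∀ i, Fintype (m' i)] [∀ i, DecidableEq (m' i)]
    (M : ∀ i, Matrix (m' i) (m' i) ℂ) (v : ((i : ι) × m' i) → ℂ) (x : (i : ι) × m' i) :
    (Matrix.blockDiagonal' M *ᵥ v) x = (M x.1 *ᵥ fun i => v ⟨x.1, i⟩) x.2 := by
  obtain ⟨j, i⟩ := x
  rw [mulVec, dotProduct, ← Finset.univ_sigma_univ, Finset.sum_sigma]
  rw [Finset.sum_eq_single j ?_ (by simp)]
  · simp [mulVec, dotProduct, Matrix.blockDiagonal'_apply_eq]
  · intro j' _ hj'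
    apply Finset.sum_eq_zero
    intro i' _
    rw [Matrix.blockDiagonal'_apply_ne _ _ _ (Ne.symm hj'), zero_mul]

end StmtAux

theorem stmt_3 (n : ℕ) (k : Fin n → ℕ) (z : Fin n → ℂ) (α : Fin n → ℕ → ℂ)
    (β : Fin n → ℂ) (hz : Function.Injective z)
    (Z : Matrix ((j : Fin n) × Fin (k j + 1)) ((j : Fin n) × Fin (k j + 1)) ℂ)
    (hZ : Z = Matrix.blockDiagonal' fun j => jordanBlock (k j) (z j) (α j))
    (w : ((j : Fin n) × Fin (k j + 1)) → ℂ)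
    (hw : w = fun x => if (x.2 : ℕ) = k x.1 then β x.1 else 0)
    (p q : Polynomial ℂ) :
    star ((Polynomial.aeval Z q) *ᵥ w) ⬝ᵥ ((Polynomial.aeval Z p) *ᵥ w) =
      ∑ j : Fin n, (‖β j‖ : ℂ) ^ 2 *
        ∑ r ∈ Finset.range (k j + 1),
          (‖(∏ i ∈ Finset.Icc 1 r, α j i) / (r.factorial : ℂ)‖ : ℂ) ^ 2 *
            (starRingEnd ℂ) ((Polynomial.derivative^[r] q).eval (z j)) *
              ((Polynomial.derivative^[r] p).eval (z j)) := by
  have hZa : ∀ s : ℂ[X],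
      aeval (Matrix.blockDiagonal' fun j => jordanBlock (k j) (z j) (α j)) s
        = Matrix.blockDiagonal' (fun j => aeval (jordanBlock (k j) (z j) (α j)) s) := by
    intro s
    have h1 := Polynomial.aeval_algHom_apply
      (StmtAux.bdAlgHom (fun j : Fin n => Fin (k j + 1)))
      (fun j => jordanBlock (k j) (z j) (α j)) s
    have h2 : ∀ j, (aeval (fun j => jordanBlock (k j) (z j) (α j)) s) j
        = aeval (jordanBlock (k j) (z j) (α j)) s := by
      intro j
      exact (Polynomial.aeval_algHom_apply
        (Pi.evalAlgHom ℂ (fun j : Fin n => Matrix (Fin (k j + 1)) (Fin (k j + 1)) ℂ) j)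
        (fun j => jordanBlock (k j) (z j) (α j)) s).symm
    have h3 : (StmtAux.bdAlgHom (fun j : Fin n => Fin (k j + 1)))
        (fun j => jordanBlock (k j) (z j) (α j))
        = Matrix.blockDiagonal' (fun j => jordanBlock (k j) (z j) (α j)) := rfl
    rw [← h3, h1, show (StmtAux.bdAlgHom fun j : Fin n => Fin (k j + 1))
        ((aeval fun j => jordanBlock (k j) (z j) (α j)) s)
      = Matrix.blockDiagonal' ((aeval fun j => jordanBlock (k j) (z j) (α j)) s) from rfl,
      funext h2]
  have hmul : ∀ s : ℂ[X], ((aeval Z s) *ᵥ w)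
      = fun x : (j : Fin n) × Fin (k j + 1) =>
          β x.1 * StmtAux.cVec (k x.1) (z x.1) (α x.1) s x.2 := by
    intro s
    funext x
    rw [hZ, hZa s, StmtAux.bd_mulVec]
    have hw' : (fun i => w ⟨x.1, i⟩) = β x.1 • StmtAux.eLast (k x.1) := by
      funext i
      simp [hw, StmtAux.eLast]
    rw [hw', mulVec_smul, StmtAux.aeval_jordan]
    simp
  rw [hmul p, hmul q]
  rw [dotProduct]
  rw [← Finset.univ_sigma_univ, Finset.sum_sigma]
  apply Finset.sum_congr rfl
  intro j _
  have habs : ∀ x : ℂ, ((‖x‖ : ℝ) : ℂ) ^ 2 = (starRingEnd ℂ) x * x := by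
    intro x
    rw [show ((‖x‖ : ℝ) : ℂ) ^ 2 = ((‖x‖ ^ 2 : ℝ) : ℂ) by push_cast; ring,
      Complex.sq_norm, Complex.normSq_eq_conj_mul_self]
  set g : ℕ → ℂ := fun r =>
    ((‖β j‖ : ℝ) : ℂ) ^ 2 *
      (((‖(∏ i ∈ Finset.Icc 1 r, α j i) / (r.factorial : ℂ)‖ : ℝ) : ℂ) ^ 2 *
        (starRingEnd ℂ) ((Polynomial.derivative^[r] q).eval (z j)) *
          ((Polynomial.derivative^[r] p).eval (z j))) with hg
  have hterm : ∀ i : Fin (k j + 1),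
      star (β j * StmtAux.cVec (k j) (z j) (α j) q i) *
        (β j * StmtAux.cVec (k j) (z j) (α j) p i) = g (k j - (i : ℕ)) := by
    intro i
    simp only [hg, StmtAux.cVec, habs, ← Complex.star_def, star_mul', star_div₀]
    ring
  calc (∑ i : Fin (k j + 1),
        (star fun x : (j : Fin n) × Fin (k j + 1) =>
          β x.1 * StmtAux.cVec (k x.1) (z x.1) (α x.1) q x.2) ⟨j, i⟩ *
        (β j * StmtAux.cVec (k j) (z j) (α j) p i))
      = ∑ i ∈ Finset.range (k j + 1), g (k j - i) := by
        rw [← Fin.sum_univ_eq_sum_range (fun m => g (k j - m)) (k j + 1)]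
        apply Finset.sum_congr rfl
        intro i _
        rw [← hterm i, Pi.star_apply]
    _ = ∑ r ∈ Finset.range (k j + 1), g r := by
        rw [← Finset.sum_range_reflect g (k j + 1)]
        apply Finset.sum_congr rfl
        intro i hi
        congr 1
    _ = _ := by rw [← Finset.mul_sum]
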